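/- For every positive integer n and every even positive integer d, the automaton R_{n,d} rejects all words in LimsupOdd_{n,d}: for every infinite word w over Σ_{n,d} in which the largest priority occurring infinitely often is odd, every run of R_{n,d} reading w is rejecting. -/

import Mathlib

namespace PGSep

/-- Letters of the alphabet `Σ_{n,d}`: triples (source node, priority, target node). -/
abbrev Letter : Type := ℕ × ℕ × ℕ

/-- The priority component of a letter. -/
def prio (e : Letter) : ℕ := e.2.1

/-- Membership in the alphabet `Σ_{n,d} = {1,…,n} × {1,…,d} × {1,…,n}`. -/
def InAlph (n d : ℕ) (e : Letter) : Prop :=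
  1 ≤ e.1 ∧ e.1 ≤ n ∧ 1 ≤ e.2.1 ∧ e.2.1 ≤ d ∧ 1 ≤ e.2.2 ∧ e.2.2 ≤ n

/-- Infinite words over the alphabet. -/
abbrev Word : Type := ℕ → Letter

/-- `p` occurs infinitely often among the values of `f`. -/
def InfOft (f : ℕ → ℕ) (p : ℕ) : Prop := ∀ N, ∃ k, N ≤ k ∧ f k = p

/-- The largest value occurring infinitely often in `f` exists and is even. -/
def MaxInfOftEven (f : ℕ → ℕ) : Prop :=
  ∃ p, Even p ∧ InfOft f p ∧ ∀ q, InfOft f q → q ≤ p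

/-- The largest value occurring infinitely often in `f` exists and is odd. -/
def MaxInfOftOdd (f : ℕ → ℕ) : Prop :=
  ∃ p, Odd p ∧ InfOft f p ∧ ∀ q, InfOft f q → q ≤ p

/-- `LimsupEven_{n,d}`: the largest priority occurring infinitely often is even. -/
def LimsupEven (w : Word) : Prop := MaxInfOftEven fun k => prio (w k)

/-- `LimsupOdd_{n,d}`: the largest priority occurring infinitely often is odd. -/
def LimsupOdd (w : Word) : Prop := MaxInfOftOdd fun k => prio (w k)

/-- An infinite sequence of triples is a path in the edge set `E`. -/
def IsPathSeq {V : Type*} (E : Set (V × ℕ × V)) (w : ℕ → V × ℕ × V) : Prop :=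
  ∀ k, w k ∈ E ∧ (w k).2.2 = (w (k + 1)).1

/-- A game graph with `n` nodes (the set {1,…,n}) and priorities up to `d`. -/
structure GameGraph (n d : ℕ) where
  /-- nodes owned by Even (V_□) -/
  evenN : Set ℕ
  /-- nodes owned by Odd (V_△) -/
  oddN : Set ℕ
  /-- the starting node -/
  start : ℕ
  /-- the set of edges (a subset of the alphabet) -/
  edges : Set Letter
  union_eq : evenN ∪ oddN = Set.Icc 1 n
  disj : Disjoint evenN oddN
  start_mem : start ∈ Set.Icc 1 n
  edges_alph : ∀ e ∈ edges, InAlph n d e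
  total : ∀ v ∈ Set.Icc (1 : ℕ) n, ∃ e ∈ edges, e.1 = v

/-- A play in a game graph: an infinite path starting at the starting node,
identified with the word listing its consecutive edges. -/
def IsPlay {n d : ℕ} (G : GameGraph n d) (w : Word) : Prop :=
  (w 0).1 = G.start ∧ IsPathSeq G.edges w

/-- A positional strategy for Even: one outgoing edge for each node of `V_□`. -/
structure EPosStrat {n d : ℕ} (G : GameGraph n d) where
  choice : ℕ → Letter
  mem : ∀ v ∈ G.evenN, choice v ∈ G.edges ∧ (choice v).1 = v

/-- A positional strategy for Odd: one outgoing edge for each node of `V_△`. -/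
structure OPosStrat {n d : ℕ} (G : GameGraph n d) where
  choice : ℕ → Letter
  mem : ∀ v ∈ G.oddN, choice v ∈ G.edges ∧ (choice v).1 = v

/-- A play arises from a positional strategy of Even. -/
def ArisesE {n d : ℕ} {G : GameGraph n d} (τ : EPosStrat G) (w : Word) : Prop :=
  IsPlay G w ∧ ∀ k, (w k).1 ∈ G.evenN → w k = τ.choice (w k).1

/-- A play arises from a positional strategy of Odd. -/
def ArisesO {n d : ℕ} {G : GameGraph n d} (τ : OPosStrat G) (w : Word) : Prop :=
  IsPlay G w ∧ ∀ k, (w k).1 ∈ G.oddN → w k = τ.choice (w k).1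

/-- A positional strategy for Even is winning: every arising play is won by Even. -/
def EWinningPos {n d : ℕ} {G : GameGraph n d} (τ : EPosStrat G) : Prop :=
  ∀ w, ArisesE τ w → LimsupEven w

/-- A positional strategy for Odd is winning: every arising play is won by Odd
(i.e. not won by Even). -/
def OWinningPos {n d : ℕ} {G : GameGraph n d} (τ : OPosStrat G) : Prop :=
  ∀ w, ArisesO τ w → ¬ LimsupEven w

/-- `PosEven_{n,d}`: plays arising from positional winning strategies for Even. -/
def PosEven (n d : ℕ) : Set Word :=
  {w | ∃ G : GameGraph n d, ∃ τ : EPosStrat G, EWinningPos τ ∧ ArisesE τ w}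

/-- `PosOdd_{n,d}`: plays arising from positional winning strategies for Odd. -/
def PosOdd (n d : ℕ) : Set Word :=
  {w | ∃ G : GameGraph n d, ∃ τ : OPosStrat G, OWinningPos τ ∧ ArisesO τ w}

/-- A nondeterministic automaton reading letters, with state space `Q`. -/
structure Automaton (Q : Type*) where
  init : Q
  trans : Set (Q × Letter × ℕ × Q)

/-- Transitions: (source state, letter, emitted priority, target state). -/
abbrev Trans (Q : Type*) : Type _ := Q × Letter × ℕ × Q

def tSrc {Q : Type*} (t : Trans Q) : Q := t.1
def tLetter {Q : Type*} (t : Trans Q) : Letter := t.2.1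
def tPrio {Q : Type*} (t : Trans Q) : ℕ := t.2.2.1
def tTgt {Q : Type*} (t : Trans Q) : Q := t.2.2.2

/-- `A` is a (total) nondeterministic parity automaton over `Σ_{n,d}` with
transition priorities in `{1,…,d'}`. -/
def IsParityAutomaton (n d d' : ℕ) {Q : Type*} (A : Automaton Q) : Prop :=
  (∀ t ∈ A.trans, InAlph n d (tLetter t) ∧ 1 ≤ tPrio t ∧ tPrio t ≤ d') ∧
  (∀ (s : Q) (e : Letter), InAlph n d e → ∃ p s', (s, e, p, s') ∈ A.trans)

/-- A run of the automaton: an infinite path of transitions starting at `init`. -/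
def IsRun {Q : Type*} (A : Automaton Q) (ρ : ℕ → Trans Q) : Prop :=
  tSrc (ρ 0) = A.init ∧ ∀ k, ρ k ∈ A.trans ∧ tTgt (ρ k) = tSrc (ρ (k + 1))

/-- The run `ρ` reads the word `w`. -/
def Reads {Q : Type*} (ρ : ℕ → Trans Q) (w : Word) : Prop := ∀ k, tLetter (ρ k) = w k

/-- A run is accepting: the largest priority labelling infinitely many
of its transitions is even. -/
def Accepting {Q : Type*} (ρ : ℕ → Trans Q) : Prop := MaxInfOftEven fun k => tPrio (ρ k)

/-- The language of the automaton. -/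
def Lang {Q : Type*} (A : Automaton Q) : Set Word :=
  {w | ∃ ρ, IsRun A ρ ∧ Reads ρ w ∧ Accepting ρ}

/-- A transition strategy for `A`, resolving nondeterminism based on the word read
so far, the current state, and the next letter. -/
structure TransStrat (n d : ℕ) {Q : Type*} (A : Automaton Q) where
  app : List Letter → Q → Letter → Trans Q
  valid : ∀ w s e, InAlph n d e →
    app w s e ∈ A.trans ∧ tSrc (app w s e) = s ∧ tLetter (app w s e) = e

/-- The state reached after reading the first `k` letters of `w` following `σ`. -/
def stateAt {n d : ℕ} {Q : Type*} (A : Automaton Q) (σ : TransStrat n d A) (w : Word) :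
    ℕ → Q
  | 0 => A.init
  | k + 1 => tTgt (σ.app ((List.range k).map w) (stateAt A σ w k) (w k))

/-- The run obtained by following the transition strategy `σ` while reading `w`. -/
def followRun {n d : ℕ} {Q : Type*} (A : Automaton Q) (σ : TransStrat n d A) (w : Word)
    (k : ℕ) : Trans Q :=
  σ.app ((List.range k).map w) (stateAt A σ w k) (w k)

/-- The transition strategy `σ` is winning for the set of words `L`. -/
def WinningFor {n d : ℕ} {Q : Type*} (A : Automaton Q) (σ : TransStrat n d A)
    (L : Set Word) : Prop :=
  ∀ w ∈ L, Accepting (followRun A σ w)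

/-- `A` is good for games: some transition strategy is winning for the whole `L(A)`. -/
def GFG (n d : ℕ) {Q : Type*} (A : Automaton Q) : Prop :=
  ∃ σ : TransStrat n d A, WinningFor A σ (Lang A)

/-- `A` is a parity-games separator. -/
def PGSeparator (n d : ℕ) {Q : Type*} (A : Automaton Q) : Prop :=
  (∀ w ∈ PosEven n d, w ∈ Lang A) ∧ ∀ w ∈ PosOdd n d, w ∉ Lang A

/-- `A` is a strong PG separator: additionally it rejects all of `LimsupOdd`. -/
def StrongPGSeparator (n d : ℕ) {Q : Type*} (A : Automaton Q) : Prop :=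
  PGSeparator n d A ∧ ∀ w : Word, LimsupOdd w → w ∉ Lang A

/-- `A` is suitable for parity games (SFPG). -/
def SFPG (n d : ℕ) {Q : Type*} (A : Automaton Q) : Prop :=
  PGSeparator n d A ∧
  ∀ (G : GameGraph n d) (τ : EPosStrat G), EWinningPos τ →
    ∃ σ : TransStrat n d A, WinningFor A σ {w | ArisesE τ w}

/-- A generic game with parity winning condition, over an arbitrary set of nodes. -/
structure PGame (V : Type*) where
  evenOwn : V → Prop
  start : V
  edges : Set (V × ℕ × V)

/-- A play of a generic game. -/
def PGame.IsPlay {V : Type*} (g : PGame V) (w : ℕ → V × ℕ × V) : Prop :=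
  (w 0).1 = g.start ∧ IsPathSeq g.edges w

/-- `IsFinPath E u l v`: the list of edges `l` is a finite path from `u` to `v`. -/
def IsFinPath {V : Type*} (E : Set (V × ℕ × V)) : V → List (V × ℕ × V) → V → Prop
  | u, [], v => u = v
  | u, e :: l, v => e ∈ E ∧ e.1 = u ∧ IsFinPath E e.2.2 l v

/-- Even has a winning strategy in the game `g`. -/
def EvenWins {V : Type*} (g : PGame V) : Prop :=
  ∃ str : List (V × ℕ × V) → V × ℕ × V,
    (∀ l v, IsFinPath g.edges g.start l v → g.evenOwn v →
      str l ∈ g.edges ∧ (str l).1 = v) ∧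
    ∀ w, g.IsPlay w → (∀ k, g.evenOwn ((w k).1) → w k = str ((List.range k).map w)) →
      MaxInfOftEven fun k => (w k).2.1

/-- Odd has a winning strategy in the game `g`. -/
def OddWins {V : Type*} (g : PGame V) : Prop :=
  ∃ str : List (V × ℕ × V) → V × ℕ × V,
    (∀ l v, IsFinPath g.edges g.start l v → ¬ g.evenOwn v →
      str l ∈ g.edges ∧ (str l).1 = v) ∧
    ∀ w, g.IsPlay w → (∀ k, ¬ g.evenOwn ((w k).1) → w k = str ((List.range k).map w)) →
      ¬ MaxInfOftEven fun k => (w k).2.1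

/-- Even has a strategy winning for the safety condition `safe` in the game `g`. -/
def EvenWinsSafety {V : Type*} (g : PGame V) (safe : V → Prop) : Prop :=
  ∃ str : List (V × ℕ × V) → V × ℕ × V,
    (∀ l v, IsFinPath g.edges g.start l v → g.evenOwn v →
      str l ∈ g.edges ∧ (str l).1 = v) ∧
    ∀ w, g.IsPlay w → (∀ k, g.evenOwn ((w k).1) → w k = str ((List.range k).map w)) →
      ∀ k, safe (w k).2.2

/-- A game graph viewed as a generic game. -/
def GameGraph.toPGame {n d : ℕ} (G : GameGraph n d) : PGame ℕ :=
  { evenOwn := fun v => v ∈ G.evenN, start := G.start, edges := G.edges }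

/-- The synchronized product `G × A`. -/
def prodGame {n d : ℕ} {Q : Type*} (G : GameGraph n d) (A : Automaton Q) :
    PGame ((ℕ ⊕ Letter) × Q) where
  evenOwn := fun x => match x.1 with
    | Sum.inl v => v ∈ G.evenN
    | Sum.inr _ => True
  start := (Sum.inl G.start, A.init)
  edges := {ed | (∃ e ∈ G.edges, ∃ s : Q, ed = ((Sum.inl e.1, s), 1, (Sum.inr e, s))) ∨
    (∃ t ∈ A.trans, tLetter t ∈ G.edges ∧
      ed = ((Sum.inr (tLetter t), tSrc t), tPrio t, (Sum.inl (tLetter t).2.2, tTgt t)))}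

/-- The number of registers: `rn(n) = 1 + ⌊log₂ n⌋`. -/
def rn (n : ℕ) : ℕ := 1 + Nat.log 2 n

/-- Update of a register state (bottom register first) by priority `p`:
the maximal prefix of registers smaller than `p` is replaced by `p`. -/
def update (p : ℕ) : List ℕ → List ℕ
  | [] => []
  | r :: l => if r < p then p :: update p l else r :: l

/-- The `k`-reset (registers numbered from 1, bottom first): the `k`-th register is
removed and a `1` is inserted at the bottom. -/
def resetReg (k : ℕ) (l : List ℕ) : List ℕ := 1 :: l.eraseIdx (k - 1)

/-- The value of register number `k` (registers numbered from 1, bottom first). -/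
def regVal (k : ℕ) (l : List ℕ) : ℕ := l.getD (k - 1) 0

/-- Lehtinen's register automaton `R_{n,d}`. -/
def Raut (n d : ℕ) : Automaton (List ℕ) where
  init := List.replicate (rn n) 1
  trans := {t | ∃ s e, InAlph n d e ∧
    (t = (s, e, 1, update (prio e) s) ∨
     ∃ k, 1 ≤ k ∧ k ≤ rn n ∧
       ((Even (regVal k (update (prio e) s)) ∧
           t = (s, e, 2 * k, resetReg k (update (prio e) s))) ∨
        (Odd (regVal k (update (prio e) s)) ∧
           t = (s, e, 2 * k + 1, resetReg k (update (prio e) s)))))}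

/-- States of the safety automaton `S_{n,d}`: `none` is the rejecting state `rej`;
otherwise a state of `R_{n,d}` together with a tuple of counters (bottom first:
`c_0` is the head). -/
abbrev SState : Type := Option (List ℕ × List ℕ)

/-- Counters `c_0,…,c_{k-1}` are reset to `c0`; the rest is kept. -/
def bumpKeep (c0 k : ℕ) (c : List ℕ) : List ℕ := List.replicate k c0 ++ c.drop k

/-- Counters `c_0,…,c_{k-1}` are reset to `c0`; counter `c_k` is decremented. -/
def bumpDec (c0 k : ℕ) (c : List ℕ) : List ℕ :=
  List.replicate k c0 ++ ((c.getD k 0 - 1) :: c.drop (k + 1))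

/-- The safety automaton `S_{n,d}`. -/
def Saut (n d : ℕ) : Automaton SState where
  init := some (List.replicate (rn n) 1, List.replicate (rn n + 1) n)
  trans := {t |
    (∃ e, InAlph n d e ∧ t = (none, e, 1, none)) ∨
    (∃ s c e k s', 1 ≤ k ∧ (s, e, 2 * k, s') ∈ (Raut n d).trans ∧
       t = (some (s, c), e, 2, some (s', bumpKeep n k c))) ∨
    (∃ s c e k s', (s, e, 2 * k + 1, s') ∈ (Raut n d).trans ∧
       ((1 < c.getD k 0 ∧ t = (some (s, c), e, 2, some (s', bumpDec n k c))) ∨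
        (c.getD k 0 = 1 ∧ t = (some (s, c), e, 1, none))))}

/-- `bad(ρ) ≤ B` for an infinite run `ρ`: every infix containing no transition of
priority above an odd `p` contains at most `B` transitions of priority `p`. -/
def badLE {Q : Type*} (ρ : ℕ → Trans Q) (B : ℕ) : Prop :=
  ∀ a b p, Odd p → (∀ i, a ≤ i → i < b → tPrio (ρ i) ≤ p) →
    ((Finset.Ico a b).filter fun i => tPrio (ρ i) = p).card ≤ B

/-- `bad(ρ) ≤ B` for a partial run of length `L` (possibly infinite). -/
def badLEPartial {Q : Type*} (ρ : ℕ → Trans Q) (L : ℕ∞) (B : ℕ) : Prop :=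
  ∀ (a b p : ℕ), Odd p → (b : ℕ∞) ≤ L → (∀ i, a ≤ i → i < b → tPrio (ρ i) ≤ p) →
    ((Finset.Ico a b).filter fun i => tPrio (ρ i) = p).card ≤ B

/-- The strategy subgraph `G_τ`: all outgoing edges of Odd's nodes, and only the
chosen edge from each of Even's nodes. -/
def GtauEdges {n d : ℕ} (G : GameGraph n d) (τ : EPosStrat G) : Set Letter :=
  {e | e ∈ G.edges ∧ (e.1 ∈ G.evenN → e = τ.choice e.1)}

/-- One step along an edge of `E`. -/
def StepRel (E : Set Letter) (u v : ℕ) : Prop := ∃ p, (u, p, v) ∈ E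

/-- Reachability along edges of `E`. -/
def Reach (E : Set Letter) : ℕ → ℕ → Prop := Relation.ReflTransGen (StepRel E)

/-- `V_τ`: the nodes of `G_τ` reachable from the starting node. -/
def Vtau {n d : ℕ} (G : GameGraph n d) (τ : EPosStrat G) : Set ℕ :=
  {v | Reach (GtauEdges G τ) G.start v}

/-- `G_{S,p}`: edges of `E` inside `S` of priority at most `p`. -/
def subEdges (E : Set Letter) (S : Set ℕ) (p : ℕ) : Set Letter :=
  {e | e ∈ E ∧ e.1 ∈ S ∧ e.2.2 ∈ S ∧ prio e ≤ p}

/-- `parts` lists the strongly connected components of the graph `(S, E)` in a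
topological order. -/
def IsSCCDecomp (E : Set Letter) (S : Set ℕ) (parts : List (Set ℕ)) : Prop :=
  (∀ P ∈ parts, P.Nonempty ∧ P ⊆ S) ∧
  (∀ v ∈ S, ∃ P ∈ parts, v ∈ P) ∧
  List.Pairwise Disjoint parts ∧
  (∀ P ∈ parts, ∀ u ∈ P, ∀ v ∈ S, ((Reach E u v ∧ Reach E v u) ↔ v ∈ P)) ∧
  (∀ (i j : ℕ) (hi : i < parts.length) (hj : j < parts.length), i < j →
    ∀ u ∈ parts.get ⟨j, hj⟩, ∀ v ∈ parts.get ⟨i, hi⟩, ¬ StepRel E u v)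

/-- The nodes of a tree given by the children function `ch` with root `(r, R)`. -/
inductive TreeNode (ch : ℕ → Set ℕ → List (Set ℕ)) (r : ℕ) (R : Set ℕ) :
    ℕ → Set ℕ → Prop where
  | root : TreeNode ch r R r R
  | child {k : ℕ} {S T : Set ℕ} : TreeNode ch r R (k + 1) S → T ∈ ch (k + 1) S →
      TreeNode ch r R k T

/-- `ch` describes a game tree of `G_τ`: the root is `(⌈d/2⌉, V_τ)`, and the children
of a node `(k+1, S)` are the SCCs of `G_{S,2(k+1)-1}` in topological order. -/
def IsGameTree {n d : ℕ} (G : GameGraph n d) (τ : EPosStrat G)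
    (ch : ℕ → Set ℕ → List (Set ℕ)) : Prop :=
  ∀ k S, TreeNode ch ((d + 1) / 2) (Vtau G τ) (k + 1) S →
    IsSCCDecomp (subEdges (GtauEdges G τ) S (2 * (k + 1) - 1)) S (ch (k + 1) S)

/-- `fstl ch l k S`: the leftmost descendant of the node `(k, S)` on level `l`
(for `l ≤ k`). -/
def fstl (ch : ℕ → Set ℕ → List (Set ℕ)) (l : ℕ) : ℕ → Set ℕ → Set ℕ
  | 0, S => S
  | k + 1, S => if l = k + 1 then S else fstl ch l k ((ch (k + 1) S).headD ∅)


/-! ### Auxiliary lemmas for Statement 12 -/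

lemma length_update (p : ℕ) (l : List ℕ) : (update p l).length = l.length := by
  induction l with
  | nil => rfl
  | cons r t ih => simp only [update]; split <;> simp [ih]

lemma getD_update (p : ℕ) (l : List ℕ) (i : ℕ) :
    (update p l).getD i 0 = l.getD i 0 ∨
      ((update p l).getD i 0 = p ∧ l.getD i 0 < p) := by
  induction l generalizing i with
  | nil => left; rfl
  | cons r t ih =>
    simp only [update]
    split
    · cases i with
      | zero => right; refine ⟨rfl, by simpa using ‹r < p›⟩
      | succ i => simpa using ih i
    · left; rfl

lemma le_getD_update (p : ℕ) (l : List ℕ) (i : ℕ) :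
    l.getD i 0 ≤ (update p l).getD i 0 := by
  rcases getD_update p l i with h | ⟨h1, h2⟩ <;> omega

lemma getD_zero_update (p : ℕ) (l : List ℕ) (hl : l ≠ []) :
    p ≤ (update p l).getD 0 0 := by
  cases l with
  | nil => simp at hl
  | cons r t =>
    simp only [update]
    split
    · simp
    · simp; omega

lemma mem_update (p : ℕ) (l : List ℕ) : ∀ x ∈ update p l, x = p ∨ x ∈ l := by
  induction l with
  | nil => simp [update]
  | cons r t ih =>
    simp only [update]
    split
    · intro x hx
      rcases List.mem_cons.mp hx with h | h
      · exact Or.inl h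
      · rcases ih x h with h' | h'
        · exact Or.inl h'
        · exact Or.inr (List.mem_cons_of_mem _ h')
    · intro x hx; exact Or.inr hx

lemma mem_update_ge (p : ℕ) (l : List ℕ) (hs : l.Pairwise (· ≤ ·)) :
    ∀ x ∈ update p l, p ≤ x := by
  induction l with
  | nil => simp [update]
  | cons r t ih =>
    obtain ⟨hr, ht⟩ := List.pairwise_cons.mp hs
    simp only [update]
    split
    · intro x hx
      rcases List.mem_cons.mp hx with h | h
      · omega
      · exact ih ht x h
    · intro x hx
      rcases List.mem_cons.mp hx with h | h
      · omega
      · have := hr x h; omega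

lemma sorted_update (p : ℕ) (l : List ℕ) (hs : l.Pairwise (· ≤ ·)) :
    (update p l).Pairwise (· ≤ ·) := by
  induction l with
  | nil => simpa [update]
  | cons r t ih =>
    obtain ⟨hr, ht⟩ := List.pairwise_cons.mp hs
    simp only [update]
    split
    · exact List.pairwise_cons.mpr ⟨mem_update_ge p t ht, ih ht⟩
    · exact hs

lemma getD_eraseIdx' (l : List ℕ) (j m : ℕ) :
    (l.eraseIdx j).getD m 0 = if m < j then l.getD m 0 else l.getD (m + 1) 0 := by
  induction l generalizing j m with
  | nil => simp [List.eraseIdx]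
  | cons r t ih =>
    cases j with
    | zero => simp
    | succ j =>
      cases m with
      | zero => simp
      | succ m =>
        have he : ((r :: t).eraseIdx (j + 1)) = r :: t.eraseIdx j := rfl
        rw [he, List.getD_cons_succ, ih]
        by_cases h : m < j
        · rw [if_pos h, if_pos (by omega), List.getD_cons_succ]
        · rw [if_neg h, if_neg (by omega), List.getD_cons_succ]

lemma getD_resetReg_zero (k : ℕ) (l : List ℕ) : (resetReg k l).getD 0 0 = 1 := rfl

lemma getD_resetReg_succ (k : ℕ) (l : List ℕ) (m : ℕ) :
    (resetReg k l).getD (m + 1) 0 =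
      if m < k - 1 then l.getD m 0 else l.getD (m + 1) 0 := by
  simp only [resetReg, List.getD_cons_succ, getD_eraseIdx']

lemma getD_resetReg_of_le {j i : ℕ} (l : List ℕ) (hj : 1 ≤ j) (hji : j ≤ i) :
    (resetReg j l).getD i 0 = l.getD i 0 := by
  cases i with
  | zero => omega
  | succ m => rw [getD_resetReg_succ, if_neg (by omega)]

lemma length_resetReg (k : ℕ) (l : List ℕ) (h1 : 1 ≤ k) (h2 : k ≤ l.length) :
    (resetReg k l).length = l.length := by
  have hlt : k - 1 < l.length := by omega
  simp [resetReg, List.length_eraseIdx, hlt]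
  omega

lemma mem_resetReg (k : ℕ) (l : List ℕ) : ∀ x ∈ resetReg k l, x = 1 ∨ x ∈ l := by
  intro x hx
  rcases List.mem_cons.mp hx with h | h
  · exact Or.inl h
  · exact Or.inr ((l.eraseIdx_sublist (k - 1)).subset h)

lemma sorted_resetReg (k : ℕ) (l : List ℕ) (hs : l.Pairwise (· ≤ ·))
    (h1 : ∀ x ∈ l, 1 ≤ x) : (resetReg k l).Pairwise (· ≤ ·) :=
  List.pairwise_cons.mpr
    ⟨fun b hb => h1 b ((l.eraseIdx_sublist (k - 1)).subset hb),
     List.Pairwise.sublist (l.eraseIdx_sublist (k - 1)) hs⟩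

lemma sorted_getD_le {l : List ℕ} (hs : l.Pairwise (· ≤ ·)) {i j : ℕ} (hij : i ≤ j)
    (hj : j < l.length) : l.getD i 0 ≤ l.getD j 0 := by
  have hi : i < l.length := lt_of_le_of_lt hij hj
  rw [List.getD_eq_getElem l 0 hi, List.getD_eq_getElem l 0 hj]
  rcases eq_or_lt_of_le hij with rfl | h
  · exact le_refl _
  · exact List.pairwise_iff_getElem.mp hs i j hi hj h

/-- Invariant of the register states: correct length, sorted (bottom first,
nondecreasing), all registers at least 1. -/
def RInv (n : ℕ) (l : List ℕ) : Prop :=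
  l.length = rn n ∧ l.Pairwise (· ≤ ·) ∧ ∀ x ∈ l, 1 ≤ x

lemma rInv_update {n : ℕ} (p : ℕ) (hp : 1 ≤ p) {l : List ℕ} (h : RInv n l) :
    RInv n (update p l) := by
  obtain ⟨h1, h2, h3⟩ := h
  refine ⟨by rw [length_update, h1], sorted_update p l h2, ?_⟩
  intro x hx
  rcases mem_update p l x hx with rfl | hx'
  · exact hp
  · exact h3 x hx'

lemma rInv_resetReg {n : ℕ} (k : ℕ) (hk1 : 1 ≤ k) (hk2 : k ≤ rn n) {l : List ℕ}
    (h : RInv n l) : RInv n (resetReg k l) := by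
  obtain ⟨h1, h2, h3⟩ := h
  refine ⟨by rw [length_resetReg k l hk1 (by omega)]; exact h1,
    sorted_resetReg k l h2 h3, ?_⟩
  intro x hx
  rcases mem_resetReg k l x hx with rfl | hx'
  · exact le_refl 1
  · exact h3 x hx'

/-- `Plep p i l`: the bottom `i` registers are at most `p`. -/
def Plep (p i : ℕ) (l : List ℕ) : Prop := ∀ m, m < i → l.getD m 0 ≤ p

lemma plep_update {p i pr : ℕ} {l : List ℕ} (hpr : pr ≤ p) (h : Plep p i l) :
    Plep p i (update pr l) := by
  intro m hm
  rcases getD_update pr l m with h' | ⟨h', _⟩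
  · rw [h']; exact h m hm
  · omega

lemma plep_resetReg {p i k : ℕ} {l : List ℕ} (hp : 1 ≤ p) (h : Plep p i l) :
    Plep p i (resetReg k l) := by
  intro m hm
  cases m with
  | zero => rw [getD_resetReg_zero]; exact hp
  | succ m =>
    rw [getD_resetReg_succ]
    split
    · exact h m (by omega)
    · exact h (m + 1) hm

lemma plep_resetReg_succ {p i k : ℕ} {l : List ℕ} (hp : 1 ≤ p) (hk : i + 1 ≤ k)
    (h : Plep p i l) : Plep p (i + 1) (resetReg k l) := by
  intro m hm
  cases m with
  | zero => rw [getD_resetReg_zero]; exact hp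
  | succ m =>
    rw [getD_resetReg_succ, if_pos (by omega)]
    exact h m (by omega)

lemma tail_le (f : ℕ → ℕ) (B Q : ℕ) (hb : ∀ t, f t ≤ B)
    (hmax : ∀ q, InfOft f q → q ≤ Q) : ∃ N, ∀ t, N ≤ t → f t ≤ Q := by
  by_contra h
  push_neg at h
  have hio : ∀ v : ℕ, Q < v → ∃ N, ∀ t, N ≤ t → f t ≠ v := by
    intro v hv
    by_contra hc
    push_neg at hc
    have hinf : InfOft f v := by
      intro N
      obtain ⟨t, ht, he⟩ := hc N
      exact ⟨t, ht, he⟩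
    exact absurd (hmax v hinf) (by omega)
  choose Nf hNf using hio
  set M := (Finset.Ioc Q B).sup (fun v => if h : Q < v then Nf v h else 0) with hM
  obtain ⟨t, ht, hft⟩ := h M
  have hQ : Q < f t := hft
  have hmem : f t ∈ Finset.Ioc Q B := Finset.mem_Ioc.mpr ⟨hQ, hb t⟩
  have hle : (if h : Q < f t then Nf (f t) h else 0) ≤ M := Finset.le_sup (f := fun v => if h : Q < v then Nf v h else 0) hmem
  rw [dif_pos hQ] at hle
  exact hNf (f t) hQ t (le_trans hle ht) rfl

lemma step_spec {n d : ℕ} {t : Trans (List ℕ)} (ht : t ∈ (Raut n d).trans) :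
    InAlph n d (tLetter t) ∧
    ((tPrio t = 1 ∧ tTgt t = update (prio (tLetter t)) (tSrc t)) ∨
     ∃ k, 1 ≤ k ∧ k ≤ rn n ∧
       tTgt t = resetReg k (update (prio (tLetter t)) (tSrc t)) ∧
       ((tPrio t = 2 * k ∧ Even (regVal k (update (prio (tLetter t)) (tSrc t)))) ∨
        (tPrio t = 2 * k + 1 ∧
          Odd (regVal k (update (prio (tLetter t)) (tSrc t)))))) := by
  obtain ⟨s, e, he, hc⟩ := ht
  rcases hc with h | ⟨k, hk1, hk2, hc⟩
  · subst h; exact ⟨he, Or.inl ⟨rfl, rfl⟩⟩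
  · rcases hc with ⟨hev, h⟩ | ⟨hod, h⟩ <;> subst h
    · exact ⟨he, Or.inr ⟨k, hk1, hk2, rfl, Or.inl ⟨rfl, hev⟩⟩⟩
    · exact ⟨he, Or.inr ⟨k, hk1, hk2, rfl, Or.inr ⟨rfl, hod⟩⟩⟩

/-- `R_{n,d}` rejects all words of `LimsupOdd_{n,d}`: every run
reading such a word is rejecting. -/
theorem Raut_rejects_limsupOdd (n d : ℕ) (hn : 1 ≤ n) (hd : 0 < d) (hde : Even d)
    (w : Word) (hw : ∀ k, InAlph n d (w k)) (hodd : LimsupOdd w)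
    (ρ : ℕ → Trans (List ℕ)) (hρ : IsRun (Raut n d) ρ) (hr : Reads ρ w) :
    ¬ Accepting ρ := by
  intro hacc
  obtain ⟨p, hp_odd, hp_inf, hp_max⟩ := hodd
  obtain ⟨q, hq_even, hq_inf, hq_max⟩ := hacc
  have hmem : ∀ t, ρ t ∈ (Raut n d).trans := fun t => (hρ.2 t).1
  have hnext : ∀ t, tTgt (ρ t) = tSrc (ρ (t + 1)) := fun t => (hρ.2 t).2
  rw [Nat.even_iff] at hq_even
  rw [Nat.odd_iff] at hp_odd
  -- structured description of each step
  have hstep : ∀ t,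
      (tPrio (ρ t) = 1 ∧ tSrc (ρ (t + 1)) = update (prio (w t)) (tSrc (ρ t))) ∨
      ∃ k, 1 ≤ k ∧ k ≤ rn n ∧
        tSrc (ρ (t + 1)) = resetReg k (update (prio (w t)) (tSrc (ρ t))) ∧
        ((tPrio (ρ t) = 2 * k ∧
            Even (regVal k (update (prio (w t)) (tSrc (ρ t))))) ∨
         (tPrio (ρ t) = 2 * k + 1 ∧
            Odd (regVal k (update (prio (w t)) (tSrc (ρ t)))))) := by
    intro t
    have h := (step_spec (hmem t)).2
    rw [hr t, hnext t] at h
    exact h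
  have hrn1 : 1 ≤ rn n := by unfold rn; omega
  -- state invariant along the run
  have hInv : ∀ t, RInv n (tSrc (ρ t)) := by
    intro t
    induction t with
    | zero =>
      rw [hρ.1]
      refine ⟨by simp [Raut], ?_, ?_⟩
      · exact List.pairwise_replicate.mpr (Or.inr (le_refl 1))
      · intro x hx
        have := List.eq_of_mem_replicate hx
        omega
    | succ t ih =>
      have hp1 : 1 ≤ prio (w t) := (hw t).2.2.1
      rcases hstep t with ⟨_, h⟩ | ⟨k, hk1, hk2, h, _⟩
      · rw [h]; exact rInv_update _ hp1 ih
      · rw [h]; exact rInv_resetReg k hk1 hk2 (rInv_update _ hp1 ih)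
  have hlen : ∀ t, (tSrc (ρ t)).length = rn n := fun t => (hInv t).1
  -- p ≥ 1
  have hp1 : 1 ≤ p := by
    obtain ⟨t, _, ht⟩ := hp_inf 0
    have ht' : prio (w t) = p := ht
    have := (hw t).2.2.1
    omega
  -- tails
  have hwb : ∀ t, (fun k => prio (w k)) t ≤ d := fun t => (hw t).2.2.2.1
  obtain ⟨Nw, hNw⟩ := tail_le _ d p hwb hp_max
  have hρb : ∀ t, (fun k => tPrio (ρ k)) t ≤ 2 * rn n + 1 := by
    intro t
    show tPrio (ρ t) ≤ 2 * rn n + 1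
    rcases (step_spec (hmem t)).2 with ⟨h, _⟩ | ⟨k, hk1, hk2, _, ⟨h, _⟩ | ⟨h, _⟩⟩ <;>
      omega
  obtain ⟨Nρ, hNρ⟩ := tail_le _ (2 * rn n + 1) q hρb hq_max
  -- q = 2 * k0
  obtain ⟨k0, hk01, hk0rn, hq2⟩ : ∃ k, 1 ≤ k ∧ k ≤ rn n ∧ q = 2 * k := by
    obtain ⟨t, _, hqt⟩ := hq_inf 0
    have hqt' : tPrio (ρ t) = q := hqt
    rcases (step_spec (hmem t)).2 with ⟨h, _⟩ | ⟨k, hk1, hk2, _, ⟨h, _⟩ | ⟨h, _⟩⟩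
    · omega
    · exact ⟨k, hk1, hk2, by omega⟩
    · omega
  set N := max Nw Nρ with hNdef
  have hNwle : ∀ t, N ≤ t → prio (w t) ≤ p := by
    intro t ht
    exact hNw t (le_trans (le_max_left Nw Nρ) ht)
  have hNρle : ∀ t, N ≤ t → tPrio (ρ t) ≤ q := by
    intro t ht
    exact hNρ t (le_trans (le_max_right Nw Nρ) ht)
  -- register k0 does not decrease on non-(2*k0) steps after N
  have key1 : ∀ t, N ≤ t → tPrio (ρ t) ≠ 2 * k0 →
      (tSrc (ρ (t + 1))).getD (k0 - 1) 0
        = (update (prio (w t)) (tSrc (ρ t))).getD (k0 - 1) 0 := by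
    intro t hN hne
    have hπ : tPrio (ρ t) ≤ q := hNρle t hN
    rcases hstep t with ⟨_, h⟩ | ⟨k, hk1, hk2, h, hc⟩
    · rw [h]
    · have hklt : k < k0 := by rcases hc with ⟨h2, _⟩ | ⟨h2, _⟩ <;> omega
      rw [h]
      exact getD_resetReg_of_le _ hk1 (by omega)
  -- Plep is preserved after N
  have keyP : ∀ i t, N ≤ t → Plep p i (tSrc (ρ t)) → Plep p i (tSrc (ρ (t + 1))) := by
    intro i t hN hpl
    have hw' : prio (w t) ≤ p := hNwle t hN
    rcases hstep t with ⟨_, h⟩ | ⟨k, _, _, h, _⟩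
    · rw [h]; exact plep_update hw' hpl
    · rw [h]; exact plep_resetReg hp1 (plep_update hw' hpl)
  -- Plep is upgraded at 2*k0 steps
  have keyU : ∀ i t, N ≤ t → i < k0 → tPrio (ρ t) = 2 * k0 →
      Plep p i (tSrc (ρ t)) → Plep p (i + 1) (tSrc (ρ (t + 1))) := by
    intro i t hN hik hpr hpl
    have hw' : prio (w t) ≤ p := hNwle t hN
    rcases hstep t with ⟨h1, _⟩ | ⟨k, hk1, hk2, h, hc⟩
    · omega
    · have hkk : k = k0 := by rcases hc with ⟨h2, _⟩ | ⟨h2, _⟩ <;> omega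
      rw [h, hkk]
      exact plep_resetReg_succ hp1 (by omega) (plep_update hw' hpl)
  -- eventually the bottom k0 registers stay ≤ p
  have hT : ∀ i, i ≤ k0 → ∃ T, N ≤ T ∧ ∀ t, T ≤ t → Plep p i (tSrc (ρ t)) := by
    intro i
    induction i with
    | zero =>
      exact fun _ => ⟨N, le_refl N, fun t _ m hm => absurd hm (Nat.not_lt_zero m)⟩
    | succ i ih =>
      intro hik
      obtain ⟨T, hTN, hTp⟩ := ih (by omega)
      obtain ⟨t2, ht2T, ht2⟩ := hq_inf T
      have ht2' : tPrio (ρ t2) = 2 * k0 := by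
        have : tPrio (ρ t2) = q := ht2
        omega
      have hstart : Plep p (i + 1) (tSrc (ρ (t2 + 1))) :=
        keyU i t2 (le_trans hTN ht2T) (by omega) ht2' (hTp t2 ht2T)
      refine ⟨t2 + 1, by omega, ?_⟩
      intro t htt
      induction t, htt using Nat.le_induction with
      | base => exact hstart
      | succ t ht iht => exact keyP (i + 1) t (by omega) iht
  obtain ⟨T, hTN, hTp⟩ := hT k0 (le_refl k0)
  obtain ⟨t0, ht0T, ht0⟩ := hp_inf T
  have ht0' : prio (w t0) = p := ht0
  have hex : ∃ t, t0 ≤ t ∧ tPrio (ρ t) = 2 * k0 := by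
    obtain ⟨t, ht, h⟩ := hq_inf t0
    have h' : tPrio (ρ t) = q := h
    exact ⟨t, ht, by omega⟩
  classical
  have hfs := Nat.find_spec hex
  have hminf : ∀ t, t < Nat.find hex → ¬(t0 ≤ t ∧ tPrio (ρ t) = 2 * k0) :=
    fun t h => Nat.find_min hex h
  set t1 := Nat.find hex with ht1def
  obtain ⟨ht1ge, ht1pr⟩ := hfs
  have hmin : ∀ t, t0 ≤ t → t < t1 → tPrio (ρ t) ≠ 2 * k0 := by
    intro t h1 h2 h3
    exact hminf t h2 ⟨h1, h3⟩
  have hplep_u : ∀ t, T ≤ t → Plep p k0 (update (prio (w t)) (tSrc (ρ t))) := by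
    intro t ht
    exact plep_update (hNwle t (by omega)) (hTp t ht)
  have hne : tSrc (ρ t0) ≠ [] := by
    intro h
    have h2 := hlen t0
    rw [h] at h2
    simp at h2
    omega
  have hval0 : (update (prio (w t0)) (tSrc (ρ t0))).getD (k0 - 1) 0 = p := by
    have hle' : (update (prio (w t0)) (tSrc (ρ t0))).getD (k0 - 1) 0 ≤ p :=
      hplep_u t0 ht0T (k0 - 1) (by omega)
    have hg0 : p ≤ (update (prio (w t0)) (tSrc (ρ t0))).getD 0 0 := by
      rw [← ht0']; exact getD_zero_update _ _ hne
    have hsor := sorted_update (prio (w t0)) _ (hInv t0).2.1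
    have hlenu : (update (prio (w t0)) (tSrc (ρ t0))).length = rn n := by
      rw [length_update]; exact hlen t0
    have hmono := sorted_getD_le hsor (Nat.zero_le (k0 - 1)) (by omega)
    omega
  have hval1 : p ≤ (update (prio (w t1)) (tSrc (ρ t1))).getD (k0 - 1) 0 := by
    rcases Nat.eq_or_lt_of_le ht1ge with heq | hlt
    · rw [← heq]
      exact le_of_eq hval0.symm
    · have hprop : ∀ t, t0 + 1 ≤ t → t ≤ t1 → p ≤ (tSrc (ρ t)).getD (k0 - 1) 0 := by
        intro t h1
        induction t, h1 using Nat.le_induction with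
        | base =>
          intro _
          rw [key1 t0 (by omega) (hmin t0 le_rfl hlt), hval0]
        | succ t ht iht =>
          intro h2
          have hne2 : tPrio (ρ t) ≠ 2 * k0 := hmin t (by omega) (by omega)
          rw [key1 t (by omega) hne2]
          exact le_trans (iht (by omega)) (le_getD_update _ _ _)
      exact le_trans (hprop t1 (by omega) le_rfl) (le_getD_update _ _ _)
  have hle1 : (update (prio (w t1)) (tSrc (ρ t1))).getD (k0 - 1) 0 ≤ p :=
    hplep_u t1 (by omega) (k0 - 1) (by omega)
  rcases hstep t1 with ⟨h1, _⟩ | ⟨k, hk1, hk2, _, hc⟩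
  · omega
  · rcases hc with ⟨h2, hev⟩ | ⟨h2, _⟩
    · have hkk : k = k0 := by omega
      rw [hkk] at hev
      rw [Nat.even_iff] at hev
      have hev' : (update (prio (w t1)) (tSrc (ρ t1))).getD (k0 - 1) 0 % 2 = 0 := hev
      omega
    · omega

end PGSep
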